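/- Let c ∈ ℂ, r > 0, let E be a compact subset of the open disk {z : |z - c| < r}, and let f : ℂ → ℂ be complex-differentiable on an open set containing the closed disk {z : |z - c| ≤ r}. For each n ∈ ℕ let x_0^{(n)}, …, x_n^{(n)} be distinct points of E, let l_{n+1}(s) = ∏_{i=0}^n (s - x_i^{(n)}), and let P_n be the Lagrange interpolating polynomial of f at these nodes. Suppose ρ > 0 is such that limsup_{n→∞} ((sup_{x ∈ E} |l_{n+1}(x)|)·(sup_{θ∈[0,2π]} 1/|l_{n+1}(c + re^{iθ})|))^{1/(n+1)} ≤ ρ. Then for every x ∈ E, limsup_{n→∞} |f(x) - P_n(x)|^{1/(n+1)} ≤ ρ. -/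

import Mathlib

open Finset

open Polynomial Metric Real

theorem pie_kernel_identity {n : ℕ} (v : Fin (n+1) → ℂ) (hv : Function.Injective v)
    (X z : ℂ) (hz : ∀ i, z ≠ v i) (hzX : z ≠ X) :
    (z - X)⁻¹ - ∑ i, (∏ j ∈ univ.erase i, (X - v j)/(v i - v j)) * (z - v i)⁻¹
      = (∏ i, (X - v i)) * (∏ i, (z - v i))⁻¹ * (z - X)⁻¹ := by
  classical
  set W : Polynomial ℂ := ∏ i, (Polynomial.X - C (v i)) with hW
  have hWmonic : W.Monic := monic_prod_of_monic _ _ fun i _ => monic_X_sub_C _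
  have hWdeg : W.degree = (n+1 : ℕ) := by
    rw [hW, degree_prod]
    simp [degree_X_sub_C]
  have hWeval : ∀ s : ℂ, W.eval s = ∏ i, (s - v i) := by
    intro s; simp [hW, eval_prod]
  set Q : Polynomial ℂ := W /ₘ (Polynomial.X - C z) with hQ
  have hkey : W = C (W.eval z) + (Polynomial.X - C z) * Q := by
    conv_lhs => rw [← modByMonic_add_div W (Polynomial.X - C z)]
    rw [modByMonic_X_sub_C_eq_C_eval]
  have hQdeg : Q.degree < (n+1 : ℕ) := by
    have : Q.degree < W.degree := degree_divByMonic_lt W (Polynomial.X - C z)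
      hWmonic.ne_zero (by rw [degree_X_sub_C]; norm_num)
    rwa [hWdeg] at this
  have hQeval : ∀ s : ℂ, W.eval s = W.eval z + (s - z) * Q.eval s := by
    intro s; conv_lhs => rw [hkey]; simp
  -- value at nodes
  have hnode : ∀ i, Q.eval (v i) = (W.eval z) * (z - v i)⁻¹ := by
    intro i
    have h0 : W.eval (v i) = 0 := by
      rw [hWeval]; exact Finset.prod_eq_zero (Finset.mem_univ i) (by ring)
    have h1 := hQeval (v i)
    rw [h0] at h1
    have hne : z - v i ≠ 0 := sub_ne_zero.mpr (hz i)
    have h2 : Q.eval (v i) * (z - v i) = W.eval z := by linear_combination h1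
    exact (eq_mul_inv_iff_mul_eq₀ hne).mpr h2
  -- interpolation
  have hinterp : Q = Lagrange.interpolate univ v (fun i => Q.eval (v i)) :=
    Lagrange.eq_interpolate hv.injOn (by simpa using hQdeg)
  have hQX : Q.eval X = ∑ i, (W.eval z) * (z - v i)⁻¹ *
      ∏ j ∈ univ.erase i, ((X - v j) / (v i - v j)) := by
    conv_lhs => rw [hinterp]
    rw [Lagrange.interpolate_apply, eval_finset_sum]
    refine Finset.sum_congr rfl fun i _ => ?_
    rw [eval_mul, eval_C, hnode i]
    congr 1
    unfold Lagrange.basis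
    rw [eval_prod]
    refine Finset.prod_congr rfl fun j _ => ?_
    rw [Lagrange.basisDivisor]
    simp [div_eq_mul_inv, mul_comm]
  have hmain := hQeval X
  rw [hQX, hWeval X, hWeval z] at hmain
  have hlz : (∏ i, (z - v i)) ≠ 0 := by
    refine Finset.prod_ne_zero_iff.mpr fun i _ => sub_ne_zero.mpr (hz i)
  have hzX' : z - X ≠ 0 := sub_ne_zero.mpr hzX
  rw [Finset.mul_sum] at hmain
  have hS : (∑ i, (X - z) * ((∏ i, (z - v i)) * (z - v i)⁻¹ *
        ∏ j ∈ univ.erase i, (X - v j) / (v i - v j)))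
      = (X - z) * (∏ i, (z - v i)) *
        ∑ i, (∏ j ∈ univ.erase i, (X - v j) / (v i - v j)) * (z - v i)⁻¹ := by
    rw [Finset.mul_sum]
    exact Finset.sum_congr rfl fun i _ => by ring
  rw [hS] at hmain
  rw [hmain]
  field_simp
  ring

theorem pie_circleIntegral_finset_sum {ι : Type*} (s : Finset ι) (g : ι → ℂ → ℂ)
    (c : ℂ) (R : ℝ) (h : ∀ i ∈ s, CircleIntegrable (g i) c R) :
    (∮ z in C(c, R), ∑ i ∈ s, g i z) = ∑ i ∈ s, ∮ z in C(c, R), g i z := by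
  simp only [circleIntegral, smul_sum]
  rw [intervalIntegral.integral_finset_sum]
  exact fun i hi => (h i hi).out

theorem pie_circleIntegrable_sum {ι : Type*} (s : Finset ι) (g : ι → ℂ → ℂ)
    (c : ℂ) (R : ℝ) (h : ∀ i ∈ s, CircleIntegrable (g i) c R) :
    CircleIntegrable (fun z => ∑ i ∈ s, g i z) c R := by
  classical
  induction s using Finset.induction with
  | empty => simpa using circleIntegrable_const 0 c R
  | insert a t hx ih =>
    simp only [Finset.sum_insert hx]
    exact (h a (Finset.mem_insert_self a t)).add
      (ih fun i hi => h i (Finset.mem_insert_of_mem hi))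

theorem pie_error_formula (c : ℂ) (r : ℝ) (hr : 0 < r) (f : ℂ → ℂ)
    (hf : DiffContOnCl ℂ f (Metric.ball c r))
    {n : ℕ} (v : Fin (n+1) → ℂ) (hv : ∀ i, v i ∈ Metric.ball c r)
    (X : ℂ) (hX : X ∈ Metric.ball c r) :
    f X - ∑ i, f (v i) * ∏ j ∈ univ.erase i, (X - v j)/(v i - v j)
      = (2 * Real.pi * Complex.I : ℂ)⁻¹ •
        ∮ z in C(c, r), (((z - X)⁻¹ -
          ∑ i, (∏ j ∈ univ.erase i, (X - v j)/(v i - v j)) * (z - v i)⁻¹) * f z) := by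
  have hfc : ContinuousOn f (Metric.sphere c r) := by
    refine hf.continuousOn.mono ?_
    rw [closure_ball c hr.ne']
    exact sphere_subset_closedBall
  have hI : ∀ w ∈ Metric.ball c r, CircleIntegrable (fun z => (z - w)⁻¹ * f z) c r := by
    intro w hw
    refine ContinuousOn.circleIntegrable hr.le ?_
    refine ContinuousOn.mul ?_ hfc
    refine ContinuousOn.inv₀ (by fun_prop) ?_
    intro z hz
    rw [mem_sphere_iff_norm] at hz
    rw [sub_ne_zero]
    intro hzw
    rw [Metric.mem_ball, dist_eq_norm] at hw
    rw [← hzw] at hw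
    exact absurd hz (ne_of_lt hw)
  have hC : ∀ w ∈ Metric.ball c r,
      (∮ z in C(c, r), (z - w)⁻¹ * f z) = (2 * Real.pi * Complex.I : ℂ) * f w := by
    intro w hw
    simpa [smul_eq_mul] using hf.circleIntegral_sub_inv_smul hw
  set ci : Fin (n+1) → ℂ := fun i => ∏ j ∈ univ.erase i, (X - v j)/(v i - v j) with hci
  have hIi : ∀ i : Fin (n+1), CircleIntegrable (fun z => ci i * ((z - v i)⁻¹ * f z)) c r := by
    intro i
    have h := hI (v i) (hv i)
    unfold CircleIntegrable at h ⊢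
    simpa using h.const_mul (ci i)
  have hsplit : (∮ z in C(c, r), (((z - X)⁻¹ - ∑ i, ci i * (z - v i)⁻¹) * f z))
      = (∮ z in C(c, r), (z - X)⁻¹ * f z)
        - ∑ i, ci i * ∮ z in C(c, r), (z - v i)⁻¹ * f z := by
    have h1 : ∀ z : ℂ, ((z - X)⁻¹ - ∑ i, ci i * (z - v i)⁻¹) * f z
        = (z - X)⁻¹ * f z - ∑ i, ci i * ((z - v i)⁻¹ * f z) := by
      intro z
      rw [sub_mul, Finset.sum_mul]
      congr 1
      exact Finset.sum_congr rfl fun i _ => by ring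
    simp_rw [h1]
    rw [circleIntegral.integral_sub (hI X hX)
      (pie_circleIntegrable_sum univ _ c r fun i _ => hIi i),
      pie_circleIntegral_finset_sum univ _ c r fun i _ => hIi i]
    congr 1
    refine Finset.sum_congr rfl fun i _ => ?_
    have := circleIntegral.integral_smul (ci i) (fun z => (z - v i)⁻¹ * f z) c r
    simpa [smul_eq_mul] using this
  rw [hsplit, hC X hX]
  have hsum : ∀ i : Fin (n+1), (∮ z in C(c, r), (z - v i)⁻¹ * f z)
      = (2 * Real.pi * Complex.I : ℂ) * f (v i) := fun i => hC (v i) (hv i)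
  simp_rw [hsum]
  have h2pi : (2 * Real.pi * Complex.I : ℂ) ≠ 0 := by
    simp [Real.pi_ne_zero, Complex.I_ne_zero]
  rw [smul_eq_mul, mul_sub, ← mul_assoc, inv_mul_cancel₀ h2pi, one_mul, Finset.mul_sum]
  congr 1
  refine Finset.sum_congr rfl fun i _ => ?_
  have h3 : (2 * (Real.pi:ℂ) * Complex.I)⁻¹ * (ci i * (2 * (Real.pi:ℂ) * Complex.I * f (v i)))
      = ((2 * (Real.pi:ℂ) * Complex.I)⁻¹ * (2 * (Real.pi:ℂ) * Complex.I)) * (ci i * f (v i)) := by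
    ring
  rw [h3, inv_mul_cancel₀ h2pi, one_mul, mul_comm]

theorem pie_le_biSup (g : ℂ → ℝ) {E : Set ℂ} (hbdd : BddAbove (g '' E)) {Y : ℂ} (hY : Y ∈ E) :
    g Y ≤ ⨆ Z ∈ E, g Z := by
  obtain ⟨K, hK⟩ := hbdd
  rw [mem_upperBounds] at hK
  have hbdd2 : BddAbove (Set.range fun Z => ⨆ (_ : Z ∈ E), g Z) := by
    refine ⟨max K 0, ?_⟩
    rintro _ ⟨Z, rfl⟩
    by_cases hZ : Z ∈ E
    · show (⨆ (_ : Z ∈ E), g Z) ≤ K ⊔ 0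
      rw [ciSup_pos (f := fun _ => g Z) hZ]
      exact le_max_of_le_left (hK _ (Set.mem_image_of_mem g hZ))
    · show (⨆ (_ : Z ∈ E), g Z) ≤ K ⊔ 0
      haveI : IsEmpty (Z ∈ E) := ⟨hZ⟩
      rw [Real.iSup_of_isEmpty]
      exact le_max_right _ _
  calc g Y = ⨆ (_ : Y ∈ E), g Y := (ciSup_pos (f := fun _ => g Y) hY).symm
  _ ≤ ⨆ Z, ⨆ (_ : Z ∈ E), g Z := le_ciSup hbdd2 Y


/-- Asymptotic exponential convergence estimate (1d) for polynomial interpolation in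
conditional form: if the geometric factor
`(sup_E |l_{n+1}| · sup_Γ 1/|l_{n+1}|)^{1/(n+1)}` has limsup at most `ρ`, then the
interpolation error satisfies `limsup |f(x) - P_n(x)|^{1/(n+1)} ≤ ρ` on `E`. -/
theorem polynomial_interpolation_exponential_convergence (c : ℂ) (r : ℝ) (hr : 0 < r)
    (E : Set ℂ) (hE_compact : IsCompact E) (hE_sub : E ⊆ Metric.ball c r)
    (f : ℂ → ℂ) (U : Set ℂ) (hUopen : IsOpen U) (hUsub : Metric.closedBall c r ⊆ U)
    (hf : DifferentiableOn ℂ f U)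
    (x : ∀ n : ℕ, Fin (n + 1) → ℂ)
    (hx_inj : ∀ n, Function.Injective (x n))
    (hx_mem : ∀ n i, x n i ∈ E)
    (l : ℕ → ℂ → ℂ) (hl : ∀ n s, l n s = ∏ i, (s - x n i))
    (P : ℕ → ℂ → ℂ)
    (hP : ∀ n X, P n X = ∑ i, f (x n i) *
      ∏ j ∈ univ.erase i, (X - x n j) / (x n i - x n j))
    (ρ : ℝ) (hρ : 0 < ρ)
    (hfac : Filter.limsup (fun n : ℕ => ENNReal.ofReal
        (((⨆ X ∈ E, ‖l n X‖) *
          (⨆ θ : Set.Icc (0:ℝ) (2 * Real.pi),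
            1 / ‖l n (c + (r : ℂ) * Complex.exp (((θ : ℝ) : ℂ) * Complex.I))‖))
          ^ ((1 : ℝ) / (n + 1))))
        Filter.atTop ≤ ENNReal.ofReal ρ) :
    ∀ X ∈ E, Filter.limsup (fun n : ℕ =>
        ENNReal.ofReal (‖f X - P n X‖ ^ ((1 : ℝ) / (n + 1))))
      Filter.atTop ≤ ENNReal.ofReal ρ := by
  intro X hX
  -- basic facts
  have hfball : DiffContOnCl ℂ f (Metric.ball c r) := by
    apply DifferentiableOn.diffContOnCl
    rw [closure_ball c hr.ne']
    exact hf.mono hUsub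
  have hfc : ContinuousOn f (Metric.sphere c r) :=
    (hf.continuousOn).mono (sphere_subset_closedBall.trans hUsub)
  -- distance from E to the sphere
  obtain ⟨x₀, hx₀E, hx₀⟩ : ∃ x₀ ∈ E, ∀ y ∈ E, dist y c ≤ dist x₀ c := by
    obtain ⟨x₀, hx₀E, hmax⟩ := hE_compact.exists_isMaxOn ⟨X, hX⟩
      ((continuous_id.dist continuous_const).continuousOn)
    exact ⟨x₀, hx₀E, fun y hy => hmax hy⟩
  set d : ℝ := r - dist x₀ c with hd_def
  have hd : 0 < d := by
    have := hE_sub hx₀E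
    rw [Metric.mem_ball] at this
    simpa [hd_def] using this
  have hdist : ∀ Y ∈ E, ∀ z ∈ Metric.sphere c r, d ≤ ‖z - Y‖ := by
    intro Y hY z hz
    rw [mem_sphere_iff_norm] at hz
    have h1 : ‖z - c‖ - ‖Y - c‖ ≤ ‖z - c - (Y - c)‖ := norm_sub_norm_le _ _
    rw [sub_sub_sub_cancel_right] at h1
    have h2 : ‖Y - c‖ ≤ dist x₀ c := by
      rw [← dist_eq_norm]; exact hx₀ Y hY
    calc d = r - dist x₀ c := rfl
    _ ≤ ‖z - c‖ - ‖Y - c‖ := by rw [hz]; linarith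
    _ ≤ ‖z - Y‖ := h1
  have hsphere_ne : ∀ z ∈ Metric.sphere c r, ∀ Y ∈ E, z ≠ Y := by
    intro z hz Y hY h
    have := hdist Y hY z hz
    rw [h, sub_self] at this
    simp at this
    linarith
  -- bound for f on the sphere
  obtain ⟨M, hM⟩ : ∃ M, ∀ z ∈ Metric.sphere c r, ‖f z‖ ≤ M :=
    (isCompact_sphere c r).exists_bound_of_continuousOn hfc
  have hM0 : 0 ≤ M := by
    have : (c + r) ∈ Metric.sphere c r := by
      simp [Complex.dist_eq, Complex.norm_real, abs_of_pos hr]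
    exact le_trans (norm_nonneg _) (hM _ this)
  set C : ℝ := max (r * M / d) 1 with hC_def
  have hC1 : (1:ℝ) ≤ C := le_max_right _ _
  have hC0 : (0:ℝ) < C := lt_of_lt_of_le one_pos hC1
  -- the geometric factors
  set A : ℕ → ℝ := fun n => ⨆ Y ∈ E, ‖l n Y‖ with hA_def
  set B : ℕ → ℝ := fun n => ⨆ θ : Set.Icc (0:ℝ) (2 * Real.pi),
      1 / ‖l n (c + (r : ℂ) * Complex.exp (((θ : ℝ) : ℂ) * Complex.I))‖ with hB_def
  have hlcont : ∀ n, Continuous (l n) := by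
    intro n
    have : l n = fun s => ∏ i, (s - x n i) := funext (hl n)
    rw [this]
    exact continuous_finset_prod _ fun i _ => continuous_id.sub continuous_const
  have hA_le : ∀ n, ∀ Y ∈ E, ‖l n Y‖ ≤ A n := by
    intro n Y hY
    exact pie_le_biSup (fun Y => ‖l n Y‖)
      ((hE_compact.image (continuous_norm.comp (hlcont n))).bddAbove) hY
  have hA0 : ∀ n, 0 ≤ A n := fun n =>
    le_trans (norm_nonneg _) (hA_le n X hX)
  have hlz_ne : ∀ n, ∀ z ∈ Metric.sphere c r, l n z ≠ 0 := by
    intro n z hz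
    rw [hl]
    refine Finset.prod_ne_zero_iff.mpr fun i _ => sub_ne_zero.mpr ?_
    exact hsphere_ne z hz (x n i) (hx_mem n i)
  have hmem_sphere : ∀ θ : ℝ, (c + (r : ℂ) * Complex.exp ((θ : ℂ) * Complex.I)) ∈
      Metric.sphere c r := by
    intro θ
    simp [Complex.dist_eq, map_mul, Complex.norm_exp_ofReal_mul_I,
      Complex.norm_real, abs_of_pos hr]
  have hB_bdd : ∀ n, BddAbove (Set.range (fun θ : Set.Icc (0:ℝ) (2 * Real.pi) =>
      1 / ‖l n (c + (r : ℂ) * Complex.exp (((θ : ℝ) : ℂ) * Complex.I))‖)) := by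
    intro n
    refine (isCompact_range ?_).bddAbove
    refine Continuous.div continuous_const ?_ ?_
    · refine continuous_norm.comp ((hlcont n).comp ?_)
      refine continuous_const.add (continuous_const.mul ?_)
      exact Complex.continuous_exp.comp
        ((Complex.continuous_ofReal.comp continuous_subtype_val).mul continuous_const)
    · intro θ
      simpa using (hlz_ne n _ (hmem_sphere (θ : ℝ)))
  have hB_le : ∀ n, ∀ z ∈ Metric.sphere c r, (‖l n z‖)⁻¹ ≤ B n := by
    intro n z hz
    -- find θ ∈ [0, 2π] with z = c + r exp(θ I)
    have hzc : ‖z - c‖ = r := by rwa [mem_sphere_iff_norm] at hz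
    have hzc0 : z - c ≠ 0 := by
      intro h
      rw [h] at hzc
      simp at hzc
      linarith
    obtain ⟨θ, hθmem, hθ⟩ : ∃ θ ∈ Set.Icc (0:ℝ) (2 * Real.pi),
        z = c + (r : ℂ) * Complex.exp ((θ : ℂ) * Complex.I) := by
      rcases le_or_gt 0 (Complex.arg (z - c)) with h0 | h0
      · refine ⟨Complex.arg (z - c), ⟨h0, ?_⟩, ?_⟩
        · have ha := Complex.arg_le_pi (z - c)
          have hb := Real.pi_pos
          linarith
        · have h1 := Complex.norm_mul_exp_arg_mul_I (z - c)
          rw [hzc] at h1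
          rw [h1]; ring
      · refine ⟨Complex.arg (z - c) + 2 * Real.pi, ⟨?_, ?_⟩, ?_⟩
        · have ha := Complex.neg_pi_lt_arg (z - c)
          have hb := Real.pi_pos
          linarith
        · have ha := Complex.arg_le_pi (z - c)
          have hb := Real.pi_pos
          linarith
        · have h1 := Complex.norm_mul_exp_arg_mul_I (z - c)
          rw [hzc] at h1
          have h2 : ((Complex.arg (z - c) + 2 * Real.pi : ℝ) : ℂ) * Complex.I
              = (Complex.arg (z - c) : ℂ) * Complex.I + 2 * Real.pi * Complex.I := by
            push_cast; ring
          rw [h2, Complex.exp_add, Complex.exp_two_pi_mul_I, mul_one, h1]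
          ring
    have h := le_ciSup (hB_bdd n) (⟨θ, hθmem⟩ : Set.Icc (0:ℝ) (2 * Real.pi))
    rw [← hθ, one_div] at h
    exact h
  have hB0 : ∀ n, 0 ≤ B n := fun n =>
    le_trans (inv_nonneg.mpr (norm_nonneg _))
      (hB_le n _ (hmem_sphere 0))
  -- the key estimate
  have hkey : ∀ n, ‖f X - P n X‖ ≤ C * (A n * B n) := by
    intro n
    have hvball : ∀ i, x n i ∈ Metric.ball c r := fun i => hE_sub (hx_mem n i)
    have hXball : X ∈ Metric.ball c r := hE_sub hX
    rw [hP]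
    rw [pie_error_formula c r hr f hfball (x n) hvball X hXball]
    have hbound : ∀ z ∈ Metric.sphere c r,
        ‖((z - X)⁻¹ - ∑ i, (∏ j ∈ univ.erase i, (X - x n j)/(x n i - x n j)) * (z - x n i)⁻¹)
          * f z‖ ≤ A n * B n * d⁻¹ * M := by
      intro z hz
      rw [pie_kernel_identity (x n) (hx_inj n) X z
        (fun i => hsphere_ne z hz (x n i) (hx_mem n i)) (hsphere_ne z hz X hX)]
      rw [norm_mul, norm_mul, norm_mul, norm_inv, norm_inv]
      rw [← hl n X, ← hl n z]
      have h1 : ‖l n X‖ ≤ A n := hA_le n X hX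
      have h2 : (‖l n z‖)⁻¹ ≤ B n := hB_le n z hz
      have h3 : (‖z - X‖)⁻¹ ≤ d⁻¹ := by
        gcongr
        exact hdist X hX z hz
      have h4 : ‖f z‖ ≤ M := hM z hz
      have e1 : ‖l n X‖ * (‖l n z‖)⁻¹ ≤ A n * B n :=
        mul_le_mul h1 h2 (inv_nonneg.mpr (norm_nonneg _)) (hA0 n)
      have e2 : ‖l n X‖ * (‖l n z‖)⁻¹ * (‖z - X‖)⁻¹
          ≤ A n * B n * d⁻¹ :=
        mul_le_mul e1 h3 (inv_nonneg.mpr (norm_nonneg _))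
          (mul_nonneg (hA0 n) (hB0 n))
      exact mul_le_mul e2 h4 (norm_nonneg _)
        (mul_nonneg (mul_nonneg (hA0 n) (hB0 n)) (inv_nonneg.mpr hd.le))
    calc ‖(2 * Real.pi * Complex.I : ℂ)⁻¹ • ∮ z in C(c, r),
          (((z - X)⁻¹ - ∑ i, (∏ j ∈ univ.erase i, (X - x n j)/(x n i - x n j)) * (z - x n i)⁻¹)
            * f z)‖ ≤ r * (A n * B n * d⁻¹ * M) :=
        circleIntegral.norm_two_pi_i_inv_smul_integral_le_of_norm_le_const hr.le hbound
    _ = (r * M / d) * (A n * B n) := by field_simp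
    _ ≤ C * (A n * B n) := by
        have : 0 ≤ A n * B n := mul_nonneg (hA0 n) (hB0 n)
        exact mul_le_mul_of_nonneg_right (le_max_left _ _) this
  -- pass to limsup
  set u : ℕ → ENNReal := fun n => ENNReal.ofReal (C ^ ((1:ℝ)/(n+1))) with hu_def
  set v : ℕ → ENNReal := fun n => ENNReal.ofReal ((A n * B n) ^ ((1:ℝ)/(n+1))) with hv_def
  have hstep : ∀ n, ENNReal.ofReal (‖f X - P n X‖ ^ ((1 : ℝ) / (n + 1)))
      ≤ u n * v n := by
    intro n
    have he : (0:ℝ) ≤ (1:ℝ)/(n+1) := by positivity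
    have h1 : ‖f X - P n X‖ ^ ((1 : ℝ) / (n + 1))
        ≤ (C * (A n * B n)) ^ ((1 : ℝ) / (n + 1)) :=
      Real.rpow_le_rpow (norm_nonneg _) (hkey n) he
    have h2 : (C * (A n * B n)) ^ ((1 : ℝ) / (n + 1))
        = C ^ ((1:ℝ)/(n+1)) * (A n * B n) ^ ((1:ℝ)/(n+1)) :=
      Real.mul_rpow hC0.le (mul_nonneg (hA0 n) (hB0 n))
    rw [hu_def, hv_def, ← ENNReal.ofReal_mul (Real.rpow_nonneg hC0.le _)]
    exact ENNReal.ofReal_le_ofReal (h1.trans h2.le)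
  have hu_lim : Filter.Tendsto u Filter.atTop (nhds 1) := by
    have h1 : Filter.Tendsto (fun n : ℕ => (1:ℝ)/(n+1)) Filter.atTop (nhds 0) :=
      tendsto_one_div_add_atTop_nhds_zero_nat
    have h2 : Filter.Tendsto (fun n : ℕ => C ^ ((1:ℝ)/(n+1))) Filter.atTop (nhds 1) := by
      have heq : (fun n : ℕ => C ^ ((1:ℝ)/(n+1)))
          = fun n : ℕ => Real.exp (Real.log C * ((1:ℝ)/(n+1))) :=
        funext fun n => Real.rpow_def_of_pos hC0 _
      rw [heq]
      have h3 : Filter.Tendsto (fun n : ℕ => Real.log C * ((1:ℝ)/(n+1)))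
          Filter.atTop (nhds 0) := by
        simpa using h1.const_mul (Real.log C)
      have h4 := (Real.continuous_exp.tendsto 0).comp h3
      simpa [Real.exp_zero, Function.comp_def] using h4
    have h5 := (ENNReal.continuous_ofReal.tendsto 1).comp h2
    simpa [hu_def, ENNReal.ofReal_one, Function.comp_def] using h5
  have hu_limsup : Filter.limsup u Filter.atTop = 1 := hu_lim.limsup_eq
  calc Filter.limsup (fun n : ℕ =>
        ENNReal.ofReal (‖f X - P n X‖ ^ ((1 : ℝ) / (n + 1)))) Filter.atTop
      ≤ Filter.limsup (u * v) Filter.atTop :=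
        Filter.limsup_le_limsup (Filter.Eventually.of_forall hstep)
  _ ≤ Filter.limsup u Filter.atTop * Filter.limsup v Filter.atTop :=
      ENNReal.limsup_mul_le' (Or.inl (by rw [hu_limsup]; exact one_ne_zero))
        (Or.inl (by rw [hu_limsup]; exact ENNReal.one_ne_top))
  _ = Filter.limsup v Filter.atTop := by rw [hu_limsup, one_mul]
  _ ≤ ENNReal.ofReal ρ := hfac
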